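/- Under the intersection-representation characterization of competition graphs of 3-partial orders, if a graph G contains an induced path x, u, v, w of length three, then the triangles assigned to u and v are crossing: A(u) ∩ A(v) ≠ ∅, A(u) \ A(v) ≠ ∅, and A(v) \ A(u) ≠ ∅. -/
import Mathlib


/-- Lemma 2.2: for an induced path `x u v w` of length three in a graph
represented as in Theorem 2.1, the sets assigned to `u` and `v` are crossing. -/
theorem crossing_of_induced_path {V : Type*} [Fintype V] (G : SimpleGraph V)
    (A : V → Set (Fin 3 → ℝ))
    (hopen : ∀ x : V, IsOpen (A x))
    (hne : ∀ x : V, (closure (A x)).Nonempty)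
    (hadj : ∀ u v : V, u ≠ v → (G.Adj u v ↔ ∃ a : V, closure (A a) ⊆ A u ∩ A v))
    (x u v w : V) (hxv' : x ≠ v) (hxw' : x ≠ w) (huw' : u ≠ w)
    (hxu : G.Adj x u) (huv : G.Adj u v) (hvw : G.Adj v w)
    (hxv : ¬ G.Adj x v) (hxw : ¬ G.Adj x w) (huw : ¬ G.Adj u w) :
    (A u ∩ A v).Nonempty ∧ (A u \ A v).Nonempty ∧ (A v \ A u).Nonempty := by
  refine ⟨?_, ?_, ?_⟩
  · obtain ⟨a, ha⟩ := (hadj u v huv.ne).mp huv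
    obtain ⟨p, hp⟩ := hne a
    exact ⟨p, ha hp⟩
  · by_contra h
    rw [Set.not_nonempty_iff_eq_empty, Set.diff_eq_empty] at h
    obtain ⟨a, ha⟩ := (hadj x u hxu.ne).mp hxu
    exact hxv ((hadj x v hxv').mpr ⟨a, fun p hp => ⟨(ha hp).1, h (ha hp).2⟩⟩)
  · by_contra h
    rw [Set.not_nonempty_iff_eq_empty, Set.diff_eq_empty] at h
    obtain ⟨a, ha⟩ := (hadj v w hvw.ne).mp hvw
    exact huw ((hadj u w huw').mpr ⟨a, fun p hp => ⟨h (ha hp).1, (ha hp).2⟩⟩)
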